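/- Suppose β ≠ 0. Then the heavy-ball map G is a bijection of ℝⁿ × ℝⁿ onto itself, with inverse given explicitly by G⁻¹(y₁, y₂) = (y₂, y₂ + (y₂ - y₁ - α∇f(y₂))/β). Moreover, if f is r+1 times continuously differentiable for an integer r ≥ 1, then both G and G⁻¹ are r times continuously differentiable; that is, G is a C^r diffeomorphism of ℝⁿ × ℝⁿ. -/

import Mathlib

/-- Suppose `β ≠ 0`. Then the heavy-ball map
`G(z₁, z₂) = (z₁ - α∇f(z₁) + β(z₁ - z₂), z₁)` is a bijection of `ℝⁿ × ℝⁿ` onto itself,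
with inverse `G⁻¹(y₁, y₂) = (y₂, y₂ + (y₂ - y₁ - α∇f(y₂))/β)`. Moreover, if `f` is
`r+1` times continuously differentiable for an integer `r ≥ 1`, then both `G` and `G⁻¹`
are `r` times continuously differentiable: `G` is a `C^r` diffeomorphism. -/
theorem stmt_2 (n : ℕ) (f : EuclideanSpace ℝ (Fin n) → ℝ) (α β : ℝ) (hβ : β ≠ 0)
    (r : ℕ) (hr : 1 ≤ r) (hf : ContDiff ℝ (r + 1 : ℕ) f)
    (G Ginv : (EuclideanSpace ℝ (Fin n)) × (EuclideanSpace ℝ (Fin n)) →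
              (EuclideanSpace ℝ (Fin n)) × (EuclideanSpace ℝ (Fin n)))
    (hG : ∀ z, G z = (z.1 - α • gradient f z.1 + β • (z.1 - z.2), z.1))
    (hGinv : ∀ y, Ginv y = (y.2, y.2 + β⁻¹ • (y.2 - y.1 - α • gradient f y.2))) :
    Function.Bijective G ∧ Function.LeftInverse Ginv G ∧ Function.RightInverse Ginv G ∧
      ContDiff ℝ (r : ℕ) G ∧ ContDiff ℝ (r : ℕ) Ginv := by
  have hli : Function.LeftInverse Ginv G := by
    intro z
    rw [hG, hGinv]
    have h2 : z.1 + β⁻¹ • (z.1 - (z.1 - α • gradient f z.1 + β • (z.1 - z.2)) - α • gradient f z.1)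
        = z.2 := by
      have h3 : z.1 - (z.1 - α • gradient f z.1 + β • (z.1 - z.2)) - α • gradient f z.1
          = β • (z.2 - z.1) := by module
      rw [h3, smul_smul, inv_mul_cancel₀ hβ, one_smul]
      abel
    exact Prod.ext rfl h2
  have hri : Function.RightInverse Ginv G := by
    intro y
    rw [hGinv, hG]
    have h2 : y.2 - α • gradient f y.2 + β • (y.2 - (y.2 + β⁻¹ • (y.2 - y.1 - α • gradient f y.2)))
        = y.1 := by
      have h3 : y.2 - (y.2 + β⁻¹ • (y.2 - y.1 - α • gradient f y.2))
          = -(β⁻¹ • (y.2 - y.1 - α • gradient f y.2)) := by abel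
      rw [h3, smul_neg, smul_smul, mul_inv_cancel₀ hβ, one_smul]
      abel
    exact Prod.ext h2 rfl
  have hgrad : ContDiff ℝ (r : ℕ) (fun x => gradient f x) := by
    have h1 : ContDiff ℝ (r : ℕ) (fderiv ℝ f) := by
      have := hf.fderiv_right (m := (r : ℕ∞)) (by exact_mod_cast le_refl _)
      exact this
    have : (fun x => gradient f x)
        = fun x => (InnerProductSpace.toDual ℝ (EuclideanSpace ℝ (Fin n))).symm (fderiv ℝ f x) :=
      rfl
    rw [this]
    exact ((InnerProductSpace.toDual ℝ (EuclideanSpace ℝ (Fin n))).symm.contDiff).comp h1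
  have hGsm : ContDiff ℝ (r : ℕ) G := by
    have : G = fun z => (z.1 - α • gradient f z.1 + β • (z.1 - z.2), z.1) := funext hG
    rw [this]
    fun_prop
  have hGinvsm : ContDiff ℝ (r : ℕ) Ginv := by
    have : Ginv = fun y => (y.2, y.2 + β⁻¹ • (y.2 - y.1 - α • gradient f y.2)) := funext hGinv
    rw [this]
    fun_prop
  exact ⟨⟨hli.injective, hri.surjective⟩, hli, hri, hGsm, hGinvsm⟩
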